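/- Let G=(V,E) be a digraph on n vertices, r ≥ 0 an integer, and ε ∈ (0,1] a real number. Suppose every vertex of G has in-degree strictly greater than 2r + εn. Then G is r-robust if and only if G is ε-close to r-robustness, i.e., if and only if for every pair of nonempty disjoint subsets A, B ⊆ V with |A| ≥ εn and |B| ≥ εn, at least one of A and B is r-reachable. -/
import Mathlib


/-- The set of in-neighbors of `v`: vertices `u` with an edge directed from `u` to `v`. -/
def inNbrs {V : Type*} [Fintype V] (Adj : V → V → Prop) [DecidableRel Adj] (v : V) :
    Finset V :=
  Finset.univ.filter (fun u => Adj u v)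

/-- A nonempty set `S` is `r`-reachable if some `v ∈ S` has at least `r` in-neighbors
outside `S`. -/
def RReachable {V : Type*} [Fintype V] [DecidableEq V] (Adj : V → V → Prop)
    [DecidableRel Adj] (r : ℕ) (S : Finset V) : Prop :=
  ∃ v ∈ S, r ≤ (inNbrs Adj v \ S).card

/-- A digraph is `r`-robust if for every pair of nonempty disjoint vertex subsets,
at least one of them is `r`-reachable. -/
def RRobust {V : Type*} [Fintype V] [DecidableEq V] (Adj : V → V → Prop)
    [DecidableRel Adj] (r : ℕ) : Prop :=
  ∀ A B : Finset V, A.Nonempty → B.Nonempty → Disjoint A B →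
    RReachable Adj r A ∨ RReachable Adj r B

/-- A digraph is `ε`-close to `r`-robustness if every pair of nonempty disjoint vertex
subsets, each of size at least `ε * n`, contains an `r`-reachable set. -/
def CloseRRobust {V : Type*} [Fintype V] [DecidableEq V] (Adj : V → V → Prop)
    [DecidableRel Adj] (r : ℕ) (ε : ℝ) : Prop :=
  ∀ A B : Finset V, A.Nonempty → B.Nonempty → Disjoint A B →
    ε * (Fintype.card V) ≤ (A.card : ℝ) → ε * (Fintype.card V) ≤ (B.card : ℝ) →
      RReachable Adj r A ∨ RReachable Adj r B

theorem stmt3 {V : Type*} [Fintype V] [DecidableEq V]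
    (Adj : V → V → Prop) [DecidableRel Adj]
    (hloopless : ∀ v, ¬ Adj v v)
    (r : ℕ) (ε : ℝ) (hε : 0 < ε) (hε1 : ε ≤ 1)
    (hdeg : ∀ v : V, (2 * r : ℝ) + ε * (Fintype.card V) < ((inNbrs Adj v).card : ℝ)) :
    RRobust Adj r ↔ CloseRRobust Adj r ε := by
  constructor
  · intro h A B hA hB hd _ _
    exact h A B hA hB hd
  · intro h A B hA hB hd
    have key : ∀ S : Finset V, S.Nonempty → (S.card : ℝ) < ε * (Fintype.card V) →
        RReachable Adj r S := by
      intro S hS hlt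
      obtain ⟨v, hv⟩ := hS
      refine ⟨v, hv, ?_⟩
      have h1 : (inNbrs Adj v).card ≤ (inNbrs Adj v \ S).card + S.card :=
        Finset.card_le_card_sdiff_add_card
      have h2 := hdeg v
      have : (r : ℝ) < ((inNbrs Adj v \ S).card : ℝ) := by
        have := (Nat.cast_le (α := ℝ)).mpr h1
        push_cast at this ⊢
        nlinarith [Nat.cast_nonneg (α := ℝ) r]
      exact_mod_cast this.le
    by_cases h1 : (A.card : ℝ) < ε * (Fintype.card V)
    · exact Or.inl (key A hA h1)
    by_cases h2 : (B.card : ℝ) < ε * (Fintype.card V)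
    · exact Or.inr (key B hB h2)
    exact h A B hA hB hd (not_lt.mp h1) (not_lt.mp h2)
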